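/- For z(x) = cos(πx) + i sin(πx/2) sin(πx), the potential U(x) = (z''(x) + π² z(x))/z(x) equals (π²/4) · (3 cos(πx/2) + 5 cos(3πx/2)) / (cos(πx/2) - cos(3πx/2) - 2i cos(πx)) at every x where z(x) ≠ 0. -/

import Mathlib

private lemma hcosD (a x : ℝ) : HasDerivAt (fun x : ℝ => (Real.cos (a*x) : ℂ))
    ((-(a * Real.sin (a*x)) : ℝ) : ℂ) x := by
  have h1 : HasDerivAt (fun x : ℝ => a*x) a x := by
    simpa using (hasDerivAt_id x).const_mul a
  have h2 := (Real.hasDerivAt_cos (a*x)).comp x h1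
  have : HasDerivAt (fun x : ℝ => Real.cos (a*x)) (-(a * Real.sin (a*x))) x := by
    exact h2.congr_deriv (by ring)
  exact this.ofReal_comp

private lemma hsinD (a x : ℝ) : HasDerivAt (fun x : ℝ => (Real.sin (a*x) : ℂ))
    ((a * Real.cos (a*x) : ℝ) : ℂ) x := by
  have h1 : HasDerivAt (fun x : ℝ => a*x) a x := by
    simpa using (hasDerivAt_id x).const_mul a
  have h2 := (Real.hasDerivAt_sin (a*x)).comp x h1
  have : HasDerivAt (fun x : ℝ => Real.sin (a*x)) (a * Real.cos (a*x)) x := by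
    exact h2.congr_deriv (by ring)
  exact this.ofReal_comp

private lemma hsinH (x : ℝ) : HasDerivAt (fun x : ℝ => (Real.sin (Real.pi*x/2) : ℂ))
    ((Real.pi/2 * Real.cos (Real.pi*x/2) : ℝ) : ℂ) x := by
  have h := hsinD (Real.pi/2) x
  simp only [show ∀ y:ℝ, Real.pi/2*y = Real.pi*y/2 from fun y => by ring] at h
  convert h using 2; ring

private lemma hcosH (x : ℝ) : HasDerivAt (fun x : ℝ => (Real.cos (Real.pi*x/2) : ℂ))
    ((-(Real.pi/2 * Real.sin (Real.pi*x/2)) : ℝ) : ℂ) x := by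
  have h := hcosD (Real.pi/2) x
  simp only [show ∀ y:ℝ, Real.pi/2*y = Real.pi*y/2 from fun y => by ring] at h
  convert h using 2; ring

/-- Explicit formula (19) for the even potential with a spectral singularity at k₀ = π. -/
theorem stmt_7 (z : ℝ → ℂ)
    (hzdef : ∀ x : ℝ, z x = (Real.cos (Real.pi * x) : ℝ) +
      Complex.I * (Real.sin (Real.pi * x / 2) * Real.sin (Real.pi * x) : ℝ)) :
    ∀ x : ℝ, z x ≠ 0 →
      (deriv (deriv z) x + (Real.pi : ℂ) ^ 2 * z x) / z x =
      ((Real.pi : ℂ) ^ 2 / 4) *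
        ((3 * Real.cos (Real.pi * x / 2) + 5 * Real.cos (3 * Real.pi * x / 2) : ℝ)) /
        ((Real.cos (Real.pi * x / 2) - Real.cos (3 * Real.pi * x / 2) : ℝ) -
          2 * Complex.I * (Real.cos (Real.pi * x) : ℝ)) := by
  have hzfun : z = fun y : ℝ => (Real.cos (Real.pi*y) : ℂ) +
      Complex.I * ((Real.sin (Real.pi*y/2) : ℂ) * (Real.sin (Real.pi*y) : ℂ)) := by
    funext y; rw [hzdef y]; push_cast; ring
  have hz' : ∀ y : ℝ, HasDerivAt z
      (((-(Real.pi * Real.sin (Real.pi*y)) : ℝ) : ℂ) +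
        Complex.I * (((Real.pi/2 * Real.cos (Real.pi*y/2) : ℝ) : ℂ) * (Real.sin (Real.pi*y) : ℂ)
          + (Real.sin (Real.pi*y/2) : ℂ) * ((Real.pi * Real.cos (Real.pi*y) : ℝ) : ℂ))) y := by
    intro y
    rw [hzfun]
    exact (hcosD Real.pi y).add (((hsinH y).mul (hsinD Real.pi y)).const_mul Complex.I)
  have hdz : deriv z = fun y : ℝ =>
      (((-(Real.pi * Real.sin (Real.pi*y)) : ℝ) : ℂ) +
        Complex.I * (((Real.pi/2 * Real.cos (Real.pi*y/2) : ℝ) : ℂ) * (Real.sin (Real.pi*y) : ℂ)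
          + (Real.sin (Real.pi*y/2) : ℂ) * ((Real.pi * Real.cos (Real.pi*y) : ℝ) : ℂ))) :=
    funext fun y => (hz' y).deriv
  intro x hz
  -- second derivative at x
  have hA : HasDerivAt (fun y : ℝ => ((-(Real.pi * Real.sin (Real.pi*y)) : ℝ) : ℂ))
      ((-Real.pi : ℂ) * ((Real.pi * Real.cos (Real.pi*x) : ℝ) : ℂ)) x := by
    have h := (hsinD Real.pi x).const_mul ((-Real.pi : ℝ) : ℂ)
    refine (h.congr_deriv ?_).congr_of_eventuallyEq (Filter.Eventually.of_forall fun y => ?_)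
    · push_cast [Pi.mul_apply] <;> ring
    · push_cast [Pi.mul_apply] <;> ring
  have hB : HasDerivAt (fun y : ℝ => ((Real.pi/2 * Real.cos (Real.pi*y/2) : ℝ) : ℂ) * (Real.sin (Real.pi*y) : ℂ))
      (((Real.pi/2 : ℝ) : ℂ) * ((-(Real.pi/2 * Real.sin (Real.pi*x/2)) : ℝ) : ℂ) * (Real.sin (Real.pi*x) : ℂ)
        + ((Real.pi/2 * Real.cos (Real.pi*x/2) : ℝ) : ℂ) * ((Real.pi * Real.cos (Real.pi*x) : ℝ) : ℂ)) x := by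
    have h := (((hcosH x).const_mul ((Real.pi/2 : ℝ) : ℂ))).mul (hsinD Real.pi x)
    refine (h.congr_deriv ?_).congr_of_eventuallyEq (Filter.Eventually.of_forall fun y => ?_)
    · push_cast [Pi.mul_apply] <;> ring
    · push_cast [Pi.mul_apply] <;> ring
  have hC : HasDerivAt (fun y : ℝ => (Real.sin (Real.pi*y/2) : ℂ) * ((Real.pi * Real.cos (Real.pi*y) : ℝ) : ℂ))
      (((Real.pi/2 * Real.cos (Real.pi*x/2) : ℝ) : ℂ) * ((Real.pi * Real.cos (Real.pi*x) : ℝ) : ℂ)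
        + (Real.sin (Real.pi*x/2) : ℂ) * (((Real.pi : ℝ) : ℂ) * ((-(Real.pi * Real.sin (Real.pi*x)) : ℝ) : ℂ))) x := by
    have h := (hsinH x).mul ((hcosD Real.pi x).const_mul ((Real.pi : ℝ) : ℂ))
    refine (h.congr_deriv ?_).congr_of_eventuallyEq (Filter.Eventually.of_forall fun y => ?_)
    · push_cast [Pi.mul_apply] <;> ring
    · push_cast [Pi.mul_apply] <;> ring
  have htot := hA.add (((hB.add hC)).const_mul Complex.I)
  have hdd : deriv (deriv z) x = (-Real.pi : ℂ) * ((Real.pi * Real.cos (Real.pi*x) : ℝ) : ℂ)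
      + Complex.I * ((((Real.pi/2 : ℝ) : ℂ) * ((-(Real.pi/2 * Real.sin (Real.pi*x/2)) : ℝ) : ℂ) * (Real.sin (Real.pi*x) : ℂ)
        + ((Real.pi/2 * Real.cos (Real.pi*x/2) : ℝ) : ℂ) * ((Real.pi * Real.cos (Real.pi*x) : ℝ) : ℂ))
        + (((Real.pi/2 * Real.cos (Real.pi*x/2) : ℝ) : ℂ) * ((Real.pi * Real.cos (Real.pi*x) : ℝ) : ℂ)
        + (Real.sin (Real.pi*x/2) : ℂ) * (((Real.pi : ℝ) : ℂ) * ((-(Real.pi * Real.sin (Real.pi*x)) : ℝ) : ℂ)))) := by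
    rw [hdz]; exact htot.deriv
  -- trig rewrites
  have hpy : (Real.sin (Real.pi*x/2) : ℂ)^2 + (Real.cos (Real.pi*x/2) : ℂ)^2 = 1 := by
    exact_mod_cast Real.sin_sq_add_cos_sq (Real.pi*x/2)
  have hc : Real.cos (Real.pi*x) = 2 * Real.cos (Real.pi*x/2)^2 - 1 := by
    have h := Real.cos_two_mul (Real.pi*x/2)
    rw [show 2*(Real.pi*x/2) = Real.pi*x by ring] at h; exact h
  have hs : Real.sin (Real.pi*x) = 2 * Real.sin (Real.pi*x/2) * Real.cos (Real.pi*x/2) := by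
    have h := Real.sin_two_mul (Real.pi*x/2)
    rw [show 2*(Real.pi*x/2) = Real.pi*x by ring] at h; exact h
  have hc3 : Real.cos (3*Real.pi*x/2) = 4 * Real.cos (Real.pi*x/2)^3 - 3 * Real.cos (Real.pi*x/2) := by
    rw [show 3*Real.pi*x/2 = 3*(Real.pi*x/2) by ring]; exact Real.cos_three_mul _
  have hDz : ((Real.cos (Real.pi * x / 2) - Real.cos (3 * Real.pi * x / 2) : ℝ) : ℂ) -
      2 * Complex.I * ((Real.cos (Real.pi * x) : ℝ) : ℂ) = -(2*Complex.I) * z x := by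
    rw [hzdef x, hc, hs, hc3]
    simp only [Complex.ofReal_mul, Complex.ofReal_sub, Complex.ofReal_add, Complex.ofReal_neg,
      Complex.ofReal_div, Complex.ofReal_pow, Complex.ofReal_one, Complex.ofReal_ofNat]
    linear_combination (-4*((Real.cos (Real.pi*x/2) : ℝ):ℂ)) * hpy +
      (4*((Real.cos (Real.pi*x/2) : ℝ):ℂ)*((Real.sin (Real.pi*x/2) : ℝ):ℂ)^2) * Complex.I_sq
  have hDne : ((Real.cos (Real.pi * x / 2) - Real.cos (3 * Real.pi * x / 2) : ℝ) : ℂ) -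
      2 * Complex.I * ((Real.cos (Real.pi * x) : ℝ) : ℂ) ≠ 0 := by
    rw [hDz]
    exact mul_ne_zero (by simp [Complex.I_ne_zero]) hz
  rw [hdd, div_eq_div_iff hz hDne, hzdef x, hc, hs, hc3]
  simp only [Complex.ofReal_mul, Complex.ofReal_sub, Complex.ofReal_add, Complex.ofReal_neg,
    Complex.ofReal_div, Complex.ofReal_pow, Complex.ofReal_one, Complex.ofReal_ofNat]
  linear_combination (-(Real.pi:ℂ)^2*((Real.cos (Real.pi*x/2) : ℝ):ℂ)*(2*((Real.cos (Real.pi*x/2) : ℝ):ℂ)^2-1)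
      - 2*Complex.I*(Real.pi:ℂ)^2*((Real.cos (Real.pi*x/2) : ℝ):ℂ)^2*(1-((Real.cos (Real.pi*x/2) : ℝ):ℂ)^2)
      - 2*Complex.I*(Real.pi:ℂ)^2*((Real.cos (Real.pi*x/2) : ℝ):ℂ)^2*(5*((Real.cos (Real.pi*x/2) : ℝ):ℂ)^2-3)) * hpy
    + (-2*(Real.pi:ℂ)^2*((Real.cos (Real.pi*x/2) : ℝ):ℂ)*(2*((Real.cos (Real.pi*x/2) : ℝ):ℂ)^2-1)
        *(2*((Real.cos (Real.pi*x/2) : ℝ):ℂ)^2-1-((Real.sin (Real.pi*x/2) : ℝ):ℂ)^2/2)) * Complex.I_sq
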